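/- Let g be a Lie algebra with ad-invariant symmetric form k (e.g. the Killing form). Skew-symmetrization of the hemistrict Lie 2-algebra (C^0 = g, C^{-1} = ground field, d = 0, alternator k) yields the semistrict Lie 2-algebra with the same brackets and Jacobiator j(x,y,z) = −½ k([x,y],z); in particular −(1/12)Σ_{σ∈S_3}(−1)^σ k([x_{σ(1)},x_{σ(2)}],x_{σ(3)}) = −½ k([x,y],z). -/

import Mathlib

/-- A 2-term `L∞`-algebra: a 2-term complex `d : C⁻¹ → C⁰` with a
skew-symmetric chain-map bracket (components `b00`, `b0m`, `bm0`) and a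
totally skew-symmetric Jacobiator `jac` measuring the Jacobi defect, subject
to the `L∞` coherence law in four variables. -/
structure L2Linf (k C0 Cm1 : Type*) [Field k]
    [AddCommGroup C0] [Module k C0] [AddCommGroup Cm1] [Module k Cm1] where
  d : Cm1 →ₗ[k] C0
  b00 : C0 →ₗ[k] C0 →ₗ[k] C0
  b0m : C0 →ₗ[k] Cm1 →ₗ[k] Cm1
  bm0 : Cm1 →ₗ[k] C0 →ₗ[k] Cm1
  chain1 : ∀ x b, d (b0m x b) = b00 x (d b)
  chain2 : ∀ a y, d (bm0 a y) = b00 (d a) y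
  chain3 : ∀ a b, b0m (d a) b = bm0 a (d b)
  skew : ∀ x y, b00 x y = -b00 y x
  skewm : ∀ x a, b0m x a = -bm0 a x
  jac : C0 →ₗ[k] C0 →ₗ[k] C0 →ₗ[k] Cm1
  jac_skew12 : ∀ x y z, jac x y z = -jac y x z
  jac_skew23 : ∀ x y z, jac x y z = -jac x z y
  leib1 : ∀ x y z,
    b00 x (b00 y z) - b00 (b00 x y) z - b00 y (b00 x z) = d (jac x y z)
  leib2 : ∀ a y z,
    bm0 a (b00 y z) - bm0 (bm0 a y) z - b0m y (bm0 a z) = jac (d a) y z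
  leib3 : ∀ x b z,
    b0m x (bm0 b z) - bm0 (b0m x b) z - bm0 b (b00 x z) = jac x (d b) z
  leib4 : ∀ x y c,
    b0m x (b0m y c) - b0m (b00 x y) c - b0m y (b0m x c) = jac x y (d c)
  coh1 : ∀ x y z w,
    b0m x (jac y z w) + jac x (b00 y z) w + jac x z (b00 y w)
      + bm0 (jac x y z) w + b0m z (jac x y w)
    = jac x y (b00 z w) + jac (b00 x y) z w + b0m y (jac x z w)
      + jac y (b00 x z) w + jac y z (b00 x w)

/-- For a Lie algebra `g` with an ad-invariant symmetric
bilinear form `B` (e.g. the Killing form), skew-symmetrizing the associated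
hemistrict Lie 2-algebra (`C⁰ = g`, `C⁻¹ = k`, `d = 0`, alternator `B`) gives
the semistrict Lie 2-algebra with the same brackets and Jacobiator
`j(x,y,z) = −½ B([x,y],z)`; in particular
`−(1/12)Σ_{σ∈S₃}(−1)^σ B([x_{σ1},x_{σ2}],x_{σ3}) = −½ B([x,y],z)`. -/
theorem quadratic_skew_symmetrization (k : Type*) [Field k]
    (h2 : (2 : k) ≠ 0) (h3 : (3 : k) ≠ 0)
    (g : Type*) [LieRing g] [LieAlgebra k g]
    (B : g →ₗ[k] g →ₗ[k] k)
    (hsymm : ∀ x y : g, B x y = B y x)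
    (hinv : ∀ x y z : g, B ⁅x, y⁆ z + B y ⁅x, z⁆ = 0) :
    (∀ x y z : g,
      -(1/12 : k) • (B ⁅x, y⁆ z - B ⁅y, x⁆ z - B ⁅x, z⁆ y - B ⁅z, y⁆ x
          + B ⁅y, z⁆ x + B ⁅z, x⁆ y)
        = -(1/2 : k) • B ⁅x, y⁆ z) ∧
    ∃ L : L2Linf k g k,
      L.d = 0 ∧
      (∀ x y : g, L.b00 x y = ⁅x, y⁆) ∧
      L.b0m = 0 ∧ L.bm0 = 0 ∧
      (∀ x y z : g, L.jac x y z = -(1/2 : k) • B ⁅x, y⁆ z) := by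

  -- key consequences of invariance and symmetry
  have hK : ∀ a b c : g, B ⁅a, b⁆ c = B a ⁅b, c⁆ := by
    intro a b c
    have h := hinv b a c
    have hba : (⁅b, a⁆ : g) = -⁅a, b⁆ := (lie_skew b a).symm
    rw [hba, map_neg, LinearMap.neg_apply] at h
    linear_combination -h
  have hs12 : ∀ x y z : g, B ⁅y, x⁆ z = -B ⁅x, y⁆ z := by
    intro x y z
    have hba : (⁅y, x⁆ : g) = -⁅x, y⁆ := (lie_skew y x).symm
    rw [hba, map_neg, LinearMap.neg_apply]
  have hs23 : ∀ x y z : g, B ⁅x, z⁆ y = -B ⁅x, y⁆ z := by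
    intro x y z
    rw [hK, hK]
    have hba : (⁅z, y⁆ : g) = -⁅y, z⁆ := (lie_skew z y).symm
    rw [hba, map_neg]
  have hcyc : ∀ a b c : g, B ⁅a, b⁆ c = B ⁅b, c⁆ a := by
    intro a b c
    rw [hK, hsymm]
  constructor
  · intro x y z
    have e1 := hs12 x y z
    have e2 := hs23 x y z
    have e3 : B ⁅z, y⁆ x = -B ⁅x, y⁆ z := by
      rw [hcyc z y x, hs12]
    have e4 : B ⁅y, z⁆ x = B ⁅x, y⁆ z := by
      rw [hcyc y z x, hcyc z x y]
    have e5 : B ⁅z, x⁆ y = B ⁅x, y⁆ z := by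
      rw [hcyc z x y]
    rw [e1, e2, e3, e4, e5]
    have h12 : (12 : k) ≠ 0 := by
      intro h
      have : (12 : k) = 2 * 2 * 3 := by norm_num
      rw [this] at h
      rcases mul_eq_zero.1 h with h' | h'
      · rcases mul_eq_zero.1 h' with h'' | h'' <;> exact h2 h''
      · exact h3 h'
    field_simp
    have hh : (1 / 12 : k) * 6 = 1 / 2 := by
      rw [div_mul_eq_mul_div, div_eq_div_iff h12 h2]
      norm_num
    simp only [smul_eq_mul]
    linear_combination (-(B ⁅x, y⁆ z)) * hh
  · letI : LieRing (Module.End k g) := LieRing.ofAssociativeRing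
    refine ⟨{ d := 0
              b00 := (LieAlgebra.ad k g).toLinearMap
              b0m := 0
              bm0 := 0
              chain1 := by intro x b; simp
              chain2 := by intro a y; simp
              chain3 := by intro a b; simp
              skew := by
                intro x y
                simp only [LieHom.coe_toLinearMap, LieAlgebra.ad_apply]
                exact (lie_skew x y).symm ▸ rfl
              skewm := by intro x a; simp
              jac := (LinearMap.llcomp k g g (g →ₗ[k] k) B).comp
                ((-(1/2 : k)) • (LieAlgebra.ad k g).toLinearMap)
              jac_skew12 := by
                intro x y z
                simp only [LinearMap.coe_comp, Function.comp_apply,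
                  LinearMap.smul_apply, LieHom.coe_toLinearMap,
                  LinearMap.llcomp_apply, LieAlgebra.ad_apply, map_smul,
                  smul_eq_mul]
                rw [hs12]
                ring
              jac_skew23 := by
                intro x y z
                simp only [LinearMap.coe_comp, Function.comp_apply,
                  LinearMap.smul_apply, LieHom.coe_toLinearMap,
                  LinearMap.llcomp_apply, LieAlgebra.ad_apply, map_smul,
                  smul_eq_mul]
                rw [hs23 x z y]
                ring
              leib1 := by
                intro x y z
                simp only [LieHom.coe_toLinearMap, LieAlgebra.ad_apply,
                  LinearMap.zero_apply]
                rw [leibniz_lie]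
                abel
              leib2 := by intro a y z; simp
              leib3 := by intro x b z; simp
              leib4 := by intro x y c; simp
              coh1 := by
                intro x y z w
                simp only [LinearMap.zero_apply, LinearMap.coe_comp,
                  Function.comp_apply, LinearMap.smul_apply,
                  LieHom.coe_toLinearMap, LinearMap.llcomp_apply,
                  LieAlgebra.ad_apply, map_smul, smul_eq_mul, zero_add,
                  add_zero]
                have t1 : B ⁅x, ⁅y, z⁆⁆ w = B x ⁅⁅y, z⁆, w⁆ := hK _ _ _
                have t2 : B ⁅x, z⁆ ⁅y, w⁆ = B x ⁅z, ⁅y, w⁆⁆ := hK _ _ _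
                have t3 : B ⁅x, y⁆ ⁅z, w⁆ = B x ⁅y, ⁅z, w⁆⁆ := hK _ _ _
                have t4 : B ⁅⁅x, y⁆, z⁆ w = B x ⁅y, ⁅z, w⁆⁆ := by
                  rw [hK, hK]
                have t5 : B ⁅y, ⁅x, z⁆⁆ w = -B x ⁅z, ⁅y, w⁆⁆ := by
                  rw [hK, hsymm, hK, hK]
                  have : (⁅w, y⁆ : g) = -⁅y, w⁆ := (lie_skew w y).symm
                  rw [this, lie_neg, map_neg]
                have t6 : B ⁅y, z⁆ ⁅x, w⁆ = -B x ⁅⁅y, z⁆, w⁆ := by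
                  rw [hsymm, hK]
                  have : (⁅w, ⁅y, z⁆⁆ : g) = -⁅⁅y, z⁆, w⁆ :=
                    (lie_skew w ⁅y, z⁆).symm
                  rw [this, map_neg]
                have hjac : B x ⁅y, ⁅z, w⁆⁆
                    = B x ⁅⁅y, z⁆, w⁆ + B x ⁅z, ⁅y, w⁆⁆ := by
                  rw [leibniz_lie y z w, map_add]
                rw [t1, t2, t3, t4, t5, t6, hjac]
                ring }, ?_, ?_, ?_, ?_, ?_⟩
    · rfl
    · intro x y
      simp
    · rfl
    · rfl
    · intro x y z
      simp only [LinearMap.coe_comp, Function.comp_apply, LinearMap.smul_apply,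
        LieHom.coe_toLinearMap, LinearMap.llcomp_apply, LieAlgebra.ad_apply,
        map_smul, smul_eq_mul]
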